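/- For every α > 0, the map f ↦ |f|_α is a norm on L²(0,∞); that is, |f|_α is finite for every f ∈ L²(0,∞), |f|_α = 0 if and only if f = 0 almost everywhere, |λf|_α = |λ| |f|_α for every scalar λ, and |f + h|_α ≤ |f|_α + |h|_α. -/

import Mathlib

open MeasureTheory Real Set

/-- The Laplace-type transform `∫_0^∞ h(t) e^{-yt} dt`. -/
noncomputable def lapT (h : ℝ → ℝ) (y : ℝ) : ℝ :=
  ∫ t in Set.Ioi (0:ℝ), h t * Real.exp (-(y * t))

/-- `|h|_α = sup_{α' > α} ( ∫_{α'}^{α'+1} ( ∫_0^∞ h(t) e^{−yt} dt )² dy )^{1/2}`. -/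
noncomputable def lnorm (α : ℝ) (h : ℝ → ℝ) : ℝ :=
  ⨆ α' : Set.Ioi α, Real.sqrt (∫ y in (α' : ℝ)..(α' : ℝ) + 1, (lapT h y) ^ 2)

open scoped ENNReal

local notation "μ0" => volume.restrict (Set.Ioi (0:ℝ))

lemma exp_sq_eq (y : ℝ) : (fun t => Real.exp (-(y*t)) ^ 2) = fun t => Real.exp (-(2*y) * t) := by
  funext t; rw [sq, ← Real.exp_add]; ring_nf

lemma expMemLp {y : ℝ} (hy : 0 < y) :
    MemLp (fun t => Real.exp (-(y * t))) 2 μ0 := by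
  refine (memLp_two_iff_integrable_sq ?_).2 ?_
  · exact (Real.continuous_exp.comp (continuous_const.mul continuous_id).neg).aestronglyMeasurable
  · rw [exp_sq_eq]
    exact exp_neg_integrableOn_Ioi 0 (by linarith)

lemma l2_mul_integrable {μ : Measure ℝ} {f g : ℝ → ℝ} (hf : MemLp f 2 μ) (hg : MemLp g 2 μ) :
    Integrable (fun t => f t * g t) μ := by
  refine (hf.integrable_sq.add hg.integrable_sq).mono' (hf.1.mul hg.1) ?_
  filter_upwards with t
  simp only [Pi.add_apply]
  have h1 := abs_mul (f t) (g t)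
  rw [Real.norm_eq_abs]
  nlinarith [sq_nonneg (|f t| - |g t|), sq_abs (f t), sq_abs (g t), abs_nonneg (f t),
    abs_nonneg (g t)]

/-- the bounding constant -/
noncomputable def lapB (α : ℝ) (f : ℝ → ℝ) : ℝ :=
  (∫ t in Set.Ioi (0:ℝ), ‖f t‖ ^ (2:ℝ)) ^ ((1:ℝ)/2) *
    (∫ t in Set.Ioi (0:ℝ), ‖Real.exp (-(α*t))‖ ^ (2:ℝ)) ^ ((1:ℝ)/2)

lemma lapB_nonneg (α : ℝ) (f : ℝ → ℝ) : 0 ≤ lapB α f := by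
  apply mul_nonneg <;>
    exact Real.rpow_nonneg (integral_nonneg fun t => Real.rpow_nonneg (norm_nonneg _) _) _

lemma exp_norm_rpow_int {y : ℝ} (hy : 0 < y) :
    IntegrableOn (fun t => ‖Real.exp (-(y*t))‖ ^ (2:ℝ)) (Set.Ioi (0:ℝ)) := by
  have : (fun t => ‖Real.exp (-(y*t))‖ ^ (2:ℝ)) = fun t => Real.exp (-(2*y) * t) := by
    funext t
    rw [Real.norm_eq_abs, abs_of_pos (Real.exp_pos _), ← Real.exp_mul]
    ring_nf
  rw [this]
  exact exp_neg_integrableOn_Ioi 0 (by linarith)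

lemma lapT_abs_le {α : ℝ} (hα : 0 < α) {f : ℝ → ℝ} (hf : MemLp f 2 μ0) {y : ℝ} (hy : α ≤ y) :
    |lapT f y| ≤ lapB α f := by
  have hy0 : 0 < y := lt_of_lt_of_le hα hy
  have h2 : (2 : ℝ≥0∞) = ENNReal.ofReal (2:ℝ) := by norm_num
  have conj : (2:ℝ).HolderConjugate 2 := ⟨by norm_num, by norm_num, by norm_num⟩
  calc |lapT f y| ≤ ∫ t in Set.Ioi (0:ℝ), ‖f t * Real.exp (-(y*t))‖ := by
        rw [← Real.norm_eq_abs]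
        exact norm_integral_le_integral_norm _
    _ = ∫ t in Set.Ioi (0:ℝ), ‖f t‖ * ‖Real.exp (-(y*t))‖ := by
        simp [norm_mul]
    _ ≤ (∫ t in Set.Ioi (0:ℝ), ‖f t‖ ^ (2:ℝ)) ^ ((1:ℝ)/2) *
        (∫ t in Set.Ioi (0:ℝ), ‖Real.exp (-(y*t))‖ ^ (2:ℝ)) ^ ((1:ℝ)/2) := by
        refine integral_mul_norm_le_Lp_mul_Lq conj ?_ ?_ <;> rw [← h2]
        · exact hf
        · exact expMemLp hy0
    _ ≤ lapB α f := by
        refine mul_le_mul_of_nonneg_left ?_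
          (Real.rpow_nonneg (integral_nonneg fun t => Real.rpow_nonneg (norm_nonneg _) _) _)
        refine Real.rpow_le_rpow (integral_nonneg fun t => Real.rpow_nonneg (norm_nonneg _) _)
          ?_ (by norm_num)
        refine setIntegral_mono_on (exp_norm_rpow_int hy0) (exp_norm_rpow_int hα)
          measurableSet_Ioi ?_
        intro t ht
        refine Real.rpow_le_rpow (norm_nonneg _) ?_ (by norm_num)
        rw [Real.norm_eq_abs, Real.norm_eq_abs, abs_of_pos (Real.exp_pos _),
          abs_of_pos (Real.exp_pos _)]
        exact Real.exp_le_exp.2 (by nlinarith [le_of_lt (mem_Ioi.1 ht)])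

lemma lapT_continuousAt {f : ℝ → ℝ} (hf : MemLp f 2 μ0) {y₀ : ℝ} (hy₀ : 0 < y₀) :
    ContinuousAt (lapT f) y₀ := by
  have hb : Integrable (fun t => ‖f t‖ * Real.exp (-(y₀/2 * t))) μ0 :=
    l2_mul_integrable hf.norm (expMemLp (by linarith))
  refine continuousAt_of_dominated ?_ ?_ hb ?_
  · filter_upwards with y
    exact hf.1.mul
      (Real.continuous_exp.comp (continuous_const.mul continuous_id).neg).aestronglyMeasurable
  · filter_upwards [Ioi_mem_nhds (show y₀/2 < y₀ by linarith)] with y hy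
    refine (ae_restrict_iff' measurableSet_Ioi).2 (Filter.Eventually.of_forall fun t ht => ?_)
    rw [norm_mul, Real.norm_eq_abs (Real.exp _), abs_of_pos (Real.exp_pos _)]
    refine mul_le_mul_of_nonneg_left ?_ (norm_nonneg _)
    refine Real.exp_le_exp.2 ?_
    have ht' : (0:ℝ) < t := ht
    rw [mem_Ioi] at hy
    nlinarith
  · filter_upwards with t
    exact (continuous_const.mul
      (Real.continuous_exp.comp ((continuous_id.mul continuous_const).neg))).continuousAt

lemma term_le_lapB {α : ℝ} (hα : 0 < α) {f : ℝ → ℝ} (hf : MemLp f 2 μ0) {a : ℝ} (ha : α < a) :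
    Real.sqrt (∫ y in a..a + 1, (lapT f y) ^ 2) ≤ lapB α f := by
  by_cases hI : IntervalIntegrable (fun y => (lapT f y)^2) volume a (a+1)
  · have h1 : (∫ y in a..a+1, (lapT f y)^2) ≤ ∫ y in a..(a+1), (lapB α f)^2 := by
      refine intervalIntegral.integral_mono_on (by linarith) hI (intervalIntegrable_const) ?_
      intro y hy
      have hb : |lapT f y| ≤ lapB α f := lapT_abs_le hα hf (le_trans ha.le hy.1)
      calc (lapT f y)^2 = |lapT f y|^2 := (sq_abs _).symm
        _ ≤ (lapB α f)^2 := pow_le_pow_left₀ (abs_nonneg _) hb 2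
    have h2 : (∫ _y in a..(a+1), (lapB α f)^2) = (lapB α f)^2 := by simp
    calc Real.sqrt (∫ y in a..a + 1, (lapT f y) ^ 2) ≤ Real.sqrt ((lapB α f)^2) :=
          Real.sqrt_le_sqrt (h2 ▸ h1)
      _ = lapB α f := Real.sqrt_sq (lapB_nonneg _ _)
  · rw [intervalIntegral.integral_undef hI, Real.sqrt_zero]
    exact lapB_nonneg _ _

lemma bdd_range {α : ℝ} (hα : 0 < α) {f : ℝ → ℝ} (hf : MemLp f 2 μ0) :
    BddAbove (Set.range fun α' : Set.Ioi α =>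
      Real.sqrt (∫ y in (α' : ℝ)..(α' : ℝ) + 1, (lapT f y) ^ 2)) := by
  refine ⟨lapB α f, ?_⟩
  rintro x ⟨⟨a, ha⟩, rfl⟩
  exact term_le_lapB hα hf ha

lemma exp_image : (fun t => Real.exp (-t)) '' (Set.Ioi (0:ℝ)) = Set.Ioo 0 1 := by
  ext x
  constructor
  · rintro ⟨t, ht, rfl⟩
    refine ⟨Real.exp_pos _, ?_⟩
    rw [← Real.exp_zero]
    exact Real.exp_lt_exp.2 (by simpa using ht)
  · rintro ⟨hx0, hx1⟩
    exact ⟨-Real.log x, mem_Ioi.2 (neg_pos.2 (Real.log_neg hx0 hx1)),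
      by simp [Real.exp_log hx0]⟩

lemma exp_hasDeriv : ∀ t ∈ Set.Ioi (0:ℝ),
    HasDerivWithinAt (fun t => Real.exp (-t)) (-Real.exp (-t)) (Set.Ioi (0:ℝ)) t := by
  intro t _
  exact (((Real.hasDerivAt_exp (-t)).comp t (hasDerivAt_neg t)).congr_deriv (by simp)).hasDerivWithinAt

lemma exp_injOn : Set.InjOn (fun t => Real.exp (-t)) (Set.Ioi (0:ℝ)) :=
  (Real.exp_injective.comp neg_injective).injOn

lemma abs_fix (G : ℝ → ℝ) : (fun t => |(-Real.exp (-t))| • G (Real.exp (-t))) =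
    fun t => Real.exp (-t) • G (Real.exp (-t)) := by
  funext t; rw [abs_neg, abs_of_pos (Real.exp_pos _)]

lemma cov_exp (G : ℝ → ℝ) :
    (∫ x in Set.Ioo (0:ℝ) 1, G x) = ∫ t in Set.Ioi (0:ℝ), Real.exp (-t) • G (Real.exp (-t)) := by
  rw [← exp_image, MeasureTheory.integral_image_eq_integral_abs_deriv_smul measurableSet_Ioi
    exp_hasDeriv exp_injOn G, abs_fix G]

lemma cov_exp_int (G : ℝ → ℝ) :
    IntegrableOn G (Set.Ioo (0:ℝ) 1) ↔
      IntegrableOn (fun t => Real.exp (-t) • G (Real.exp (-t))) (Set.Ioi (0:ℝ)) := by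
  rw [← exp_image, MeasureTheory.integrableOn_image_iff_integrableOn_abs_deriv_smul
    measurableSet_Ioi exp_hasDeriv exp_injOn G, abs_fix G]

lemma ioo_finite : IsFiniteMeasure (volume.restrict (Set.Ioo (0:ℝ) 1)) := by
  constructor
  rw [Measure.restrict_apply_univ]
  simp [Real.volume_Ioo]

lemma lap_unique {α : ℝ} (hα : 0 < α) {g : ℝ → ℝ} (hg : MemLp g 2 μ0)
    (h0 : ∀ y : ℝ, α < y → lapT g y = 0) : g =ᵐ[μ0] 0 := by
  classical
  obtain ⟨g', hg'm, hgg'⟩ : ∃ g', StronglyMeasurable g' ∧ g =ᵐ[μ0] g' :=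
    ⟨hg.1.mk g, hg.1.stronglyMeasurable_mk, hg.1.ae_eq_mk⟩
  have hg2 : MemLp g' 2 μ0 := hg.ae_eq hgg'
  have hlap : ∀ y : ℝ, α < y → (∫ t in Set.Ioi (0:ℝ), g' t * Real.exp (-(y*t))) = 0 := by
    intro y hy
    have hcong : (fun t => g t * Real.exp (-(y*t))) =ᵐ[μ0] fun t => g' t * Real.exp (-(y*t)) := by
      filter_upwards [hgg'] with t ht; rw [ht]
    have : (∫ t in Set.Ioi (0:ℝ), g' t * Real.exp (-(y*t))) = lapT g y :=
      (integral_congr_ae hcong).symm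
    rw [this]; exact h0 y hy
  set n : ℕ := ⌈α⌉₊ with hn
  have hnα : α ≤ (n:ℝ) := Nat.le_ceil α
  set H : ℝ → ℝ := fun x => if x ∈ Set.Ioo (0:ℝ) 1 then g' (-Real.log x) * x ^ n else 0 with hHdef
  have hHmeas : StronglyMeasurable H := by
    apply Measurable.stronglyMeasurable
    exact Measurable.ite measurableSet_Ioo
      ((hg'm.measurable.comp Real.measurable_log.neg).mul (measurable_id.pow_const n))
      measurable_const
  have hHexp : ∀ t ∈ Set.Ioi (0:ℝ), H (Real.exp (-t)) = g' t * Real.exp (-((n:ℝ)*t)) := by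
    intro t ht
    have h1 : Real.exp (-t) ∈ Set.Ioo (0:ℝ) 1 := by
      rw [← exp_image]; exact ⟨t, ht, rfl⟩
    rw [hHdef]
    simp only [h1, if_pos]
    rw [Real.log_exp, neg_neg, ← Real.exp_nat_mul, mul_neg]
  -- L² bound for H
  have hH2 : IntegrableOn (fun x => H x ^ 2) (Set.Ioo (0:ℝ) 1) := by
    rw [cov_exp_int]
    refine hg2.integrable_sq.mono' ?_ ?_
    · exact (measurable_exp.comp measurable_neg).aestronglyMeasurable.smul
        ((hHmeas.measurable.comp (measurable_exp.comp measurable_neg)).pow_const 2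
          |>.aestronglyMeasurable)
    · refine (ae_restrict_iff' measurableSet_Ioi).2 (Filter.Eventually.of_forall fun t ht => ?_)
      rw [hHexp t ht, smul_eq_mul]
      have ht' : (0:ℝ) < t := ht
      have e1 : Real.exp (-t) ≤ 1 := Real.exp_le_one_iff.2 (by linarith)
      have e2 : Real.exp (-((n:ℝ)*t)) ≤ 1 := Real.exp_le_one_iff.2 (by
        simp only [neg_nonpos]; positivity)
      have e1' : (0:ℝ) < Real.exp (-t) := Real.exp_pos _
      have e2' : (0:ℝ) < Real.exp (-((n:ℝ)*t)) := Real.exp_pos _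
      rw [Real.norm_eq_abs, abs_of_nonneg (by positivity)]
      have h2 : Real.exp (-((n:ℝ)*t)) ^ 2 ≤ 1 := by nlinarith
      have h3 : (g' t * Real.exp (-((n:ℝ)*t))) ^ 2 ≤ g' t ^ 2 := by
        rw [mul_pow]; nlinarith [sq_nonneg (g' t)]
      nlinarith [sq_nonneg (g' t * Real.exp (-((n:ℝ)*t)))]
  have hHL2 : MemLp H 2 (volume.restrict (Set.Ioo (0:ℝ) 1)) :=
    (memLp_two_iff_integrable_sq hHmeas.aestronglyMeasurable).2 hH2
  -- moments vanish
  have hmom : ∀ k : ℕ, (∫ x in Set.Ioo (0:ℝ) 1, H x * x ^ k) = 0 := by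
    intro k
    rw [cov_exp (fun x => H x * x ^ k)]
    have heq : Set.EqOn (fun t => Real.exp (-t) • (H (Real.exp (-t)) * (Real.exp (-t)) ^ k))
        (fun t => g' t * Real.exp (-(((n:ℝ) + k + 1) * t))) (Set.Ioi (0:ℝ)) := by
      intro t ht
      simp only
      rw [hHexp t ht, ← Real.exp_nat_mul, smul_eq_mul]
      rw [show Real.exp (-t) * (g' t * Real.exp (-((n:ℝ)*t)) * Real.exp ((k:ℝ) * -t)) =
          g' t * (Real.exp (-((n:ℝ)*t)) * Real.exp ((k:ℝ)*(-t)) * Real.exp (-t)) from by ring,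
        ← Real.exp_add, ← Real.exp_add,
        show -((n:ℝ)*t) + (k:ℝ)*(-t) + -t = -(((n:ℝ)+(k:ℝ)+1)*t) from by ring]
    rw [setIntegral_congr_fun measurableSet_Ioi heq]
    exact hlap ((n:ℝ) + k + 1) (by push_cast; linarith [Nat.cast_nonneg (α := ℝ) k])
  haveI : IsFiniteMeasure (volume.restrict (Set.Ioo (0:ℝ) 1)) := ioo_finite
  have hHint : Integrable H (volume.restrict (Set.Ioo (0:ℝ) 1)) := hHL2.integrable one_le_two
  -- integrability of H times anything bounded-continuous-ish
  have hbddmul : ∀ (φ : ℝ → ℝ) (c : ℝ), Continuous φ → (∀ x ∈ Set.Ioo (0:ℝ) 1, |φ x| ≤ c) →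
      Integrable (fun x => H x * φ x) (volume.restrict (Set.Ioo (0:ℝ) 1)) := by
    intro φ c hφ hc
    refine (Integrable.bdd_mul (c := c) hHint hφ.aestronglyMeasurable ?_).congr
      (Filter.Eventually.of_forall fun x => mul_comm _ _)
    refine (ae_restrict_iff' measurableSet_Ioo).2 (Filter.Eventually.of_forall fun x hx => ?_)
    rw [Real.norm_eq_abs]; exact hc x hx
  have hpint : ∀ p : Polynomial ℝ,
      Integrable (fun x => H x * p.eval x) (volume.restrict (Set.Ioo (0:ℝ) 1)) := by
    intro p
    set q := p.toContinuousMapOn (Set.Icc (0:ℝ) 1) with hq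
    refine hbddmul _ ‖q‖ p.continuous_aeval ?_
    intro x hx
    have hx' : x ∈ Set.Icc (0:ℝ) 1 := Set.Ioo_subset_Icc_self hx
    have : ‖q ⟨x, hx'⟩‖ ≤ ‖q‖ := q.norm_coe_le_norm ⟨x, hx'⟩
    simpa [hq, Real.norm_eq_abs] using this
  have hpoly : ∀ p : Polynomial ℝ, (∫ x in Set.Ioo (0:ℝ) 1, H x * p.eval x) = 0 := by
    intro p
    induction p using Polynomial.induction_on' with
    | add p q hp hq =>
      simp only [Polynomial.eval_add, mul_add]
      rw [integral_add (hpint p) (hpint q), hp, hq, add_zero]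
    | monomial k a =>
      simp only [Polynomial.eval_monomial]
      have : (fun x => H x * (a * x ^ k)) = fun x => a * (H x * x ^ k) := by
        funext x; ring
      rw [this, integral_const_mul, hmom k, mul_zero]
  -- against bounded continuous functions
  have hCz : ∀ φ : BoundedContinuousFunction ℝ ℝ, (∫ x in Set.Ioo (0:ℝ) 1, H x * φ x) = 0 := by
    intro φ
    set I1 : ℝ := ∫ x in Set.Ioo (0:ℝ) 1, |H x| with hI1def
    have hI1 : 0 ≤ I1 := integral_nonneg fun x => abs_nonneg _
    have hHabs : Integrable (fun x => |H x|) (volume.restrict (Set.Ioo (0:ℝ) 1)) := hHint.abs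
    have hφint : Integrable (fun x => H x * φ x) (volume.restrict (Set.Ioo (0:ℝ) 1)) :=
      hbddmul _ ‖φ‖ φ.continuous (fun x _ => by
        rw [← Real.norm_eq_abs]; exact φ.norm_coe_le_norm x)
    have key : ∀ ε : ℝ, 0 < ε → |∫ x in Set.Ioo (0:ℝ) 1, H x * φ x| ≤ ε := by
      intro ε hε
      set ε' : ℝ := ε / (I1 + 1) with hε'def
      have hε' : 0 < ε' := div_pos hε (by linarith)
      -- Weierstrass approximation
      set φc : C(Set.Icc (0:ℝ) 1, ℝ) := φ.toContinuousMap.restrict (Set.Icc (0:ℝ) 1) with hφc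
      have hmem : φc ∈ closure ((polynomialFunctions (Set.Icc (0:ℝ) 1) : Set C(Set.Icc (0:ℝ) 1, ℝ))) := by
        rw [← Subalgebra.topologicalClosure_coe, polynomialFunctions_closure_eq_top (0:ℝ) 1]
        trivial
      obtain ⟨b, hbmem, hbdist⟩ := Metric.mem_closure_iff.1 hmem ε' hε'
      rw [polynomialFunctions_coe] at hbmem
      obtain ⟨p, hp⟩ := hbmem
      have hptwise : ∀ x (hx : x ∈ Set.Icc (0:ℝ) 1), |φ x - p.eval x| ≤ ε' := by
        intro x hx
        have hbx : b ⟨x, hx⟩ = p.eval x := by rw [← hp]; simp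
        have h1 := ContinuousMap.dist_apply_le_dist (f := φc) (g := b) ⟨x, hx⟩
        rw [hbx] at h1
        have h2 : dist (φ x) (p.eval x) ≤ dist φc b := by simpa [hφc] using h1
        rw [Real.dist_eq] at h2
        linarith
      have hsub : (∫ x in Set.Ioo (0:ℝ) 1, H x * φ x)
          = (∫ x in Set.Ioo (0:ℝ) 1, H x * p.eval x)
            + ∫ x in Set.Ioo (0:ℝ) 1, H x * (φ x - p.eval x) := by
        rw [← integral_add (hpint p) ((hφint.sub (hpint p)).congr
          (Filter.Eventually.of_forall fun x => by simp only [Pi.sub_apply]; ring))]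
        congr 1; funext x; ring
      rw [hsub, hpoly p, zero_add]
      have hb2 : |∫ x in Set.Ioo (0:ℝ) 1, H x * (φ x - p.eval x)|
          ≤ ∫ x in Set.Ioo (0:ℝ) 1, |H x| * ε' := by
        rw [← Real.norm_eq_abs]
        refine (norm_integral_le_integral_norm _).trans ?_
        refine setIntegral_mono_on ((hφint.sub (hpint p)).congr
          (Filter.Eventually.of_forall fun x => by simp only [Pi.sub_apply]; ring)).norm
          (hHabs.mul_const ε')
          measurableSet_Ioo ?_
        intro x hx
        rw [Real.norm_eq_abs, abs_mul]
        exact mul_le_mul_of_nonneg_left (hptwise x (Set.Ioo_subset_Icc_self hx)) (abs_nonneg _)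
      rw [integral_mul_const] at hb2
      calc |∫ x in Set.Ioo (0:ℝ) 1, H x * (φ x - p.eval x)| ≤ I1 * ε' := hb2
        _ ≤ (I1 + 1) * ε' := by nlinarith
        _ = ε := by rw [hε'def]; field_simp
    by_contra hne
    have hpos : 0 < |∫ x in Set.Ioo (0:ℝ) 1, H x * φ x| := abs_pos.2 hne
    have := key (|∫ x in Set.Ioo (0:ℝ) 1, H x * φ x| / 2) (by linarith)
    linarith
  -- conclude H = 0 a.e. via density of bounded continuous functions in L²
  haveI : Fact ((1:ℝ≥0∞) ≤ 2) := ⟨one_le_two⟩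
  set ν := volume.restrict (Set.Ioo (0:ℝ) 1) with hν
  set u : Lp ℝ 2 ν := hHL2.toLp H with hu
  have hinner : ∀ φ : BoundedContinuousFunction ℝ ℝ,
      (inner ℝ (BoundedContinuousFunction.toLp (E := ℝ) 2 ν ℝ φ) u : ℝ) = 0 := by
    intro φ
    rw [L2.inner_def]
    have h1 := BoundedContinuousFunction.coeFn_toLp (E := ℝ) 2 ν ℝ φ
    have h2 : u =ᵐ[ν] H := hHL2.coeFn_toLp
    have h3 : (fun x => (inner ℝ ((BoundedContinuousFunction.toLp (E := ℝ) 2 ν ℝ φ) x) (u x) : ℝ))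
        =ᵐ[ν] fun x => H x * φ x := by
      filter_upwards [h1, h2] with x hx1 hx2
      rw [hx1, hx2, real_inner_comm]
      simp [real_inner_eq_re_inner, mul_comm]
    rw [integral_congr_ae h3]
    exact hCz φ
  have hdense : DenseRange (BoundedContinuousFunction.toLp (E := ℝ) 2 ν ℝ) :=
    BoundedContinuousFunction.toLp_denseRange ℝ ν ℝ (by norm_num)
  have hcont : Continuous fun v : Lp ℝ 2 ν => (inner ℝ v u : ℝ) := by
    have h1 : Continuous fun v : Lp ℝ 2 ν => (inner ℝ u v : ℝ) := (innerSL ℝ u).continuous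
    have h2 : (fun v : Lp ℝ 2 ν => (inner ℝ v u : ℝ)) = fun v => (inner ℝ u v : ℝ) := by
      funext v; rw [real_inner_comm]
    rw [h2]; exact h1
  have hall : (fun v : Lp ℝ 2 ν => (inner ℝ v u : ℝ)) = fun _ => (0:ℝ) := by
    refine hcont.ext_on hdense continuous_const ?_
    rintro v ⟨φ, rfl⟩
    exact hinner φ
  have huu : (inner ℝ u u : ℝ) = 0 := congrFun hall u
  have hu0 : u = 0 := inner_self_eq_zero.1 huu
  have hH0 : H =ᵐ[ν] 0 := by
    have h2 : u =ᵐ[ν] H := hHL2.coeFn_toLp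
    rw [hu0] at h2
    exact h2.symm.trans (Lp.coeFn_zero ℝ 2 ν)
  -- transfer back
  have hsq0 : (∫ x in Set.Ioo (0:ℝ) 1, H x ^ 2) = 0 := by
    have : (fun x => H x ^ 2) =ᵐ[ν] 0 := by
      filter_upwards [hH0] with x hx
      simp only [Pi.zero_apply] at hx ⊢
      rw [hx]; ring
    rw [integral_congr_ae this]; simp
  have heq2 : (∫ x in Set.Ioo (0:ℝ) 1, H x ^ 2)
      = ∫ t in Set.Ioi (0:ℝ), g' t ^ 2 * Real.exp (-((2*(n:ℝ)+1) * t)) := by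
    rw [cov_exp (fun x => H x ^ 2)]
    refine setIntegral_congr_fun measurableSet_Ioi fun t ht => ?_
    rw [hHexp t ht, smul_eq_mul, mul_pow]
    rw [show Real.exp (-t) * (g' t ^ 2 * Real.exp (-((n:ℝ)*t)) ^ 2)
        = g' t ^ 2 * (Real.exp (-((n:ℝ)*t)) * Real.exp (-((n:ℝ)*t)) * Real.exp (-t)) from by ring,
      ← Real.exp_add, ← Real.exp_add,
      show -((n:ℝ)*t) + -((n:ℝ)*t) + -t = -((2*(n:ℝ)+1) * t) from by ring]
  have hint2 : Integrable (fun t => g' t ^ 2 * Real.exp (-((2*(n:ℝ)+1) * t))) μ0 := by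
    refine hg2.integrable_sq.mono' ?_ ?_
    · exact ((hg'm.measurable.pow_const 2).mul
        (Real.continuous_exp.comp ((continuous_const.mul continuous_id).neg)).measurable).aestronglyMeasurable
    · refine (ae_restrict_iff' measurableSet_Ioi).2 (Filter.Eventually.of_forall fun t ht => ?_)
      have ht' : (0:ℝ) < t := ht
      have e1 : Real.exp (-((2*(n:ℝ)+1) * t)) ≤ 1 := Real.exp_le_one_iff.2 (by
        simp only [neg_nonpos]; positivity)
      have e1' : (0:ℝ) < Real.exp (-((2*(n:ℝ)+1) * t)) := Real.exp_pos _
      rw [Real.norm_eq_abs, abs_of_nonneg (by positivity)]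
      nlinarith [sq_nonneg (g' t)]
  have hae : (fun t => g' t ^ 2 * Real.exp (-((2*(n:ℝ)+1) * t))) =ᵐ[μ0] 0 := by
    refine (integral_eq_zero_iff_of_nonneg_ae ?_ hint2).1 (by rw [← heq2, hsq0]) 
    exact Filter.Eventually.of_forall fun t => mul_nonneg (sq_nonneg _) (Real.exp_pos _).le
  have hg'0 : g' =ᵐ[μ0] 0 := by
    filter_upwards [hae] with t ht
    simp only [Pi.zero_apply] at ht ⊢
    have := Real.exp_pos (-((2*(n:ℝ)+1) * t))
    have hsq : g' t ^ 2 = 0 := by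
      by_contra hne
      have : 0 < g' t ^ 2 := lt_of_le_of_ne (sq_nonneg _) (Ne.symm hne)
      nlinarith
    exact pow_eq_zero_iff (n := 2) (by norm_num) |>.1 hsq
  exact hgg'.trans hg'0

lemma lapT_zero_on {α : ℝ} (hα : 0 < α) {f : ℝ → ℝ} (hf : MemLp f 2 μ0)
    (h : lnorm α f = 0) : ∀ y : ℝ, α < y → lapT f y = 0 := by
  intro y₀ hy₀
  haveI hne : Nonempty (Set.Ioi α) := ⟨⟨α+1, mem_Ioi.2 (by linarith)⟩⟩
  have hterm : ∀ a : ℝ, α < a → (∫ y in a..a+1, (lapT f y)^2) = 0 := by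
    intro a ha
    have h1 : Real.sqrt (∫ y in a..a+1, (lapT f y)^2) ≤ 0 := by
      rw [← h]
      exact le_ciSup (bdd_range hα hf) ⟨a, ha⟩
    have h2 : Real.sqrt (∫ y in a..a+1, (lapT f y)^2) = 0 :=
      le_antisymm h1 (Real.sqrt_nonneg _)
    have h3 : (0:ℝ) ≤ ∫ y in a..a+1, (lapT f y)^2 :=
      intervalIntegral.integral_nonneg (by linarith) fun y _ => sq_nonneg _
    exact (Real.sqrt_eq_zero h3).1 h2
  set a : ℝ := max ((α + y₀)/2) (y₀ - 1/2) with hadef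
  have haα : α < a := lt_max_of_lt_left (by linarith)
  have hay : a < y₀ := max_lt (by linarith) (by linarith)
  have hy1 : y₀ < a + 1 := by
    have : y₀ - 1/2 ≤ a := le_max_right _ _
    linarith
  have hcont : ∀ y ∈ Set.Icc a (a+1), ContinuousAt (fun y => (lapT f y)^2) y := by
    intro y hy
    exact (lapT_continuousAt hf (by linarith [hy.1] : (0:ℝ) < y)).pow 2
  have hconton : ContinuousOn (fun y => (lapT f y)^2) (Set.Icc a (a+1)) :=
    fun y hy => (hcont y hy).continuousWithinAt
  have hII : IntervalIntegrable (fun y => (lapT f y)^2) volume a (a+1) := by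
    apply ContinuousOn.intervalIntegrable
    rwa [uIcc_of_le (by linarith)]
  have hae0 : (fun y => (lapT f y)^2) =ᵐ[volume.restrict (Set.Ioc a (a+1))] 0 := by
    refine (intervalIntegral.integral_eq_zero_iff_of_le_of_nonneg_ae (by linarith)
      (Filter.Eventually.of_forall fun y => sq_nonneg _) hII).1 (hterm a haα)
  -- upgrade a.e. to pointwise at y₀ using continuity
  have hsq : (lapT f y₀)^2 = 0 := by
    by_contra hne0
    have hpos : 0 < (lapT f y₀)^2 := lt_of_le_of_ne (sq_nonneg _) (Ne.symm hne0)
    have hev : ∀ᶠ y in nhds y₀, (lapT f y₀)^2/2 < (lapT f y)^2 :=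
      (hcont y₀ ⟨hay.le, hy1.le⟩).eventually (eventually_gt_nhds (by linarith))
    obtain ⟨δ, hδ, hball⟩ := Metric.eventually_nhds_iff.1 hev
    set lo := max a (y₀ - δ) with hlo
    set hi := min (a+1) (y₀ + δ) with hhi
    have hlo1 : lo < y₀ := max_lt hay (by linarith)
    have hhi1 : y₀ < hi := lt_min hy1 (by linarith)
    have hN : volume {y : ℝ | ¬ (y ∈ Set.Ioc a (a+1) → (lapT f y)^2 = (0:ℝ→ℝ) y)} = 0 := by
      have h' := hae0
      rw [Filter.EventuallyEq, ae_restrict_iff' measurableSet_Ioc] at h'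
      exact ae_iff.1 h'
    have hsub : Set.Ioo lo hi ⊆
        {y : ℝ | ¬ (y ∈ Set.Ioc a (a+1) → (lapT f y)^2 = (0:ℝ→ℝ) y)} := by
      intro y hy
      simp only [Set.mem_setOf_eq, Pi.zero_apply]
      intro hPQ
      have hya : a < y := lt_of_le_of_lt (le_max_left a (y₀ - δ)) hy.1
      have hyb : y ≤ a + 1 := le_of_lt (lt_of_lt_of_le hy.2 (min_le_left _ _))
      have hd : dist y y₀ < δ := by
        rw [Real.dist_eq, abs_lt]
        have h1 : y₀ - δ ≤ lo := le_max_right _ _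
        have h2 : hi ≤ y₀ + δ := min_le_right _ _
        constructor <;> [linarith [hy.1]; linarith [hy.2]]
      have := hball hd
      have hq := hPQ ⟨hya, hyb⟩
      linarith
    have hz : volume (Set.Ioo lo hi) = 0 := measure_mono_null hsub hN
    rw [Real.volume_Ioo, ENNReal.ofReal_eq_zero] at hz
    linarith
  exact pow_eq_zero_iff (n := 2) (by norm_num) |>.1 hsq

lemma sqrt_int_eq_norm {μ : Measure ℝ} {F : ℝ → ℝ} (hF : MemLp F 2 μ) :
    Real.sqrt (∫ y, F y ^ 2 ∂μ) = ‖hF.toLp F‖ := by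
  have h1 : (inner ℝ (hF.toLp F) (hF.toLp F) : ℝ) = ∫ y, F y ^ 2 ∂μ := by
    rw [L2.inner_def]
    refine integral_congr_ae ?_
    filter_upwards [hF.coeFn_toLp] with y hy
    rw [hy]
    simp [RCLike.inner_apply, sq]
  rw [← h1, real_inner_self_eq_norm_sq, Real.sqrt_sq (norm_nonneg _)]

lemma minkowski_Ioc {a b : ℝ} {F G : ℝ → ℝ}
    (hF : MemLp F 2 (volume.restrict (Set.Ioc a b)))
    (hG : MemLp G 2 (volume.restrict (Set.Ioc a b))) :
    Real.sqrt (∫ y in Set.Ioc a b, (F y + G y) ^ 2) ≤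
      Real.sqrt (∫ y in Set.Ioc a b, F y ^ 2) + Real.sqrt (∫ y in Set.Ioc a b, G y ^ 2) := by
  haveI : Fact ((1:ℝ≥0∞) ≤ 2) := ⟨one_le_two⟩
  have hFG : MemLp (F + G) 2 (volume.restrict (Set.Ioc a b)) := hF.add hG
  have h1 : Real.sqrt (∫ y in Set.Ioc a b, (F y + G y) ^ 2) = ‖hFG.toLp (F + G)‖ := by
    have := sqrt_int_eq_norm hFG
    simpa [Pi.add_apply] using this
  rw [h1, sqrt_int_eq_norm hF, sqrt_int_eq_norm hG, MemLp.toLp_add]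
  exact norm_add_le _ _

/-- For every `α > 0`, the map `f ↦ |f|_α` is a norm on `L²(0,∞)`: `|f|_α` is finite
(the supremum is over a bounded set), `|f|_α = 0` iff `f = 0` a.e. on `(0,∞)`,
`|λf|_α = |λ| |f|_α`, and `|f + h|_α ≤ |f|_α + |h|_α`. -/
theorem lnorm_is_norm (α : ℝ) (hα : 0 < α) :
    (∀ f : ℝ → ℝ, MemLp f 2 (volume.restrict (Set.Ioi (0:ℝ))) →
      BddAbove (Set.range fun α' : Set.Ioi α =>
        Real.sqrt (∫ y in (α' : ℝ)..(α' : ℝ) + 1, (lapT f y) ^ 2))) ∧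
    (∀ f : ℝ → ℝ, MemLp f 2 (volume.restrict (Set.Ioi (0:ℝ))) →
      (lnorm α f = 0 ↔ f =ᵐ[volume.restrict (Set.Ioi (0:ℝ))] 0)) ∧
    (∀ f : ℝ → ℝ, ∀ lam : ℝ, MemLp f 2 (volume.restrict (Set.Ioi (0:ℝ))) →
      lnorm α (fun t => lam * f t) = |lam| * lnorm α f) ∧
    (∀ f h : ℝ → ℝ, MemLp f 2 (volume.restrict (Set.Ioi (0:ℝ))) →
      MemLp h 2 (volume.restrict (Set.Ioi (0:ℝ))) →
      lnorm α (fun t => f t + h t) ≤ lnorm α f + lnorm α h) := by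
  haveI hne : Nonempty (Set.Ioi α) := ⟨⟨α+1, mem_Ioi.2 (by linarith)⟩⟩
  refine ⟨fun f hf => bdd_range hα hf, ?_, ?_, ?_⟩
  · -- zero iff
    intro f hf
    constructor
    · intro h
      exact lap_unique hα hf (lapT_zero_on hα hf h)
    · intro h
      have hlz : ∀ y : ℝ, lapT f y = 0 := by
        intro y
        have hcong : (fun t => f t * Real.exp (-(y*t))) =ᵐ[μ0] fun _ => (0:ℝ) := by
          filter_upwards [h] with t ht
          simp only [Pi.zero_apply] at ht
          rw [ht, zero_mul]
        unfold lapT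
        rw [integral_congr_ae hcong, integral_zero]
      unfold lnorm
      simp only [hlz]
      simp [ciSup_const]
  · -- homogeneity
    intro f lam _hf
    unfold lnorm
    have hterm : ∀ α' : Set.Ioi α,
        Real.sqrt (∫ y in (α':ℝ)..(α':ℝ)+1, (lapT (fun t => lam * f t) y)^2)
          = |lam| * Real.sqrt (∫ y in (α':ℝ)..(α':ℝ)+1, (lapT f y)^2) := by
      intro α'
      have hl : ∀ y : ℝ, lapT (fun t => lam * f t) y = lam * lapT f y := by
        intro y
        unfold lapT
        simp only [mul_assoc]
        rw [integral_const_mul]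
      simp only [hl, mul_pow]
      rw [intervalIntegral.integral_const_mul, Real.sqrt_mul (sq_nonneg lam),
        Real.sqrt_sq_eq_abs]
    rw [iSup_congr hterm]
    exact (Real.mul_iSup_of_nonneg (abs_nonneg lam) _).symm
  · -- triangle
    intro f h hf hh
    refine ciSup_le fun α' => ?_
    obtain ⟨a, ha⟩ := α'
    have ha' : α < a := ha
    have h0a : (0:ℝ) < a := lt_trans hα ha'
    haveI : Fact ((1:ℝ≥0∞) ≤ 2) := ⟨one_le_two⟩
    have hmem : ∀ (g : ℝ → ℝ), MemLp g 2 μ0 →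
        MemLp (lapT g) 2 (volume.restrict (Set.Ioc a (a+1))) := by
      intro g hg
      haveI : IsFiniteMeasure (volume.restrict (Set.Ioc a (a+1))) :=
        ⟨by rw [Measure.restrict_apply_univ]; simp [Real.volume_Ioc]⟩
      refine MemLp.of_bound (ContinuousOn.aestronglyMeasurable ?_ measurableSet_Ioc)
        (lapB α g) ?_
      · intro y hy
        exact (lapT_continuousAt hg (by linarith [hy.1])).continuousWithinAt
      · refine (ae_restrict_iff' measurableSet_Ioc).2
          (Filter.Eventually.of_forall fun y hy => ?_)
        rw [Real.norm_eq_abs]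
        exact lapT_abs_le hα hg (by linarith [hy.1])
    have hfm := hmem f hf
    have hhm := hmem h hh
    have hadd : Set.EqOn (fun y => (lapT (fun t => f t + h t) y)^2)
        (fun y => (lapT f y + lapT h y)^2) (Set.uIcc a (a+1)) := by
      intro y hy
      rw [uIcc_of_le (by linarith)] at hy
      have hy0 : (0:ℝ) < y := by linarith [hy.1]
      simp only
      congr 1
      unfold lapT
      rw [← integral_add (l2_mul_integrable hf (expMemLp hy0))
        (l2_mul_integrable hh (expMemLp hy0))]
      congr 1
      funext t
      ring
    calc Real.sqrt (∫ y in (a:ℝ)..a+1, (lapT (fun t => f t + h t) y)^2)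
        = Real.sqrt (∫ y in Set.Ioc a (a+1), (lapT f y + lapT h y)^2) := by
          rw [intervalIntegral.integral_congr hadd,
            intervalIntegral.integral_of_le (by linarith : a ≤ a+1)]
      _ ≤ Real.sqrt (∫ y in Set.Ioc a (a+1), (lapT f y)^2)
            + Real.sqrt (∫ y in Set.Ioc a (a+1), (lapT h y)^2) := minkowski_Ioc hfm hhm
      _ ≤ lnorm α f + lnorm α h := by
          refine add_le_add ?_ ?_ <;>
            rw [← intervalIntegral.integral_of_le (by linarith : a ≤ a+1)]
          · exact le_ciSup (bdd_range hα hf) ⟨a, ha'⟩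
          · exact le_ciSup (bdd_range hα hh) ⟨a, ha'⟩
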